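/- If B is an alternating bilinear form on the finite 𝔽₂-vector space V, then the set of quadratic refinements of B has exactly Fintype.card V elements (equivalently, 2^(dim V) elements): the quadratic refinements form a torsor over the dual space of V under pointwise addition of linear functionals. -/

import Mathlib

open scoped Classical

open Finset in
private lemma exists_quadRefinement {V : Type*} [AddCommGroup V] [Module (ZMod 2) V]
    [Module.Finite (ZMod 2) V] (B : V →ₗ[ZMod 2] V →ₗ[ZMod 2] ZMod 2)
    (halt : ∀ x : V, B x x = 0) :
    ∃ q : V → ZMod 2, ∀ x y, q (x + y) = q x + q y + B x y := by
  have hsymm : ∀ x y : V, B y x = B x y := by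
    intro x y
    have h := halt (x + y)
    simp only [map_add, LinearMap.add_apply, halt] at h
    have two : (2 : ZMod 2) = 0 := rfl
    linear_combination h - (B x) y * two
  set b := Module.finBasis (ZMod 2) V with hb
  set n := Module.finrank (ZMod 2) V
  refine ⟨fun x => ∑ i, ∑ j ∈ Ioi i, b.repr x i * b.repr x j * B (b i) (b j), ?_⟩
  intro x y
  have hB : (B x) y = ∑ i, ∑ j, b.repr x i * b.repr y j * B (b i) (b j) := by
    conv_lhs => rw [← b.sum_repr x, ← b.sum_repr y]
    simp only [map_sum, map_smul, LinearMap.coe_sum, Finset.sum_apply,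
      LinearMap.smul_apply, smul_eq_mul, Finset.mul_sum]
    rw [Finset.sum_comm]
    refine Finset.sum_congr rfl fun i _ => Finset.sum_congr rfl fun j _ => by ring
  have key : ∑ i, ∑ j ∈ Ioi i,
      (b.repr x j * b.repr y i * B (b j) (b i) + b.repr x i * b.repr y j * B (b i) (b j))
      = (B x) y := by
    rw [Finset.sum_sum_Ioi_add_eq_sum_sum_off_diag
      (fun i j => b.repr x i * b.repr y j * B (b i) (b j))]
    rw [hB, Finset.sum_comm]
    refine Finset.sum_congr rfl fun j _ => ?_
    refine Finset.sum_subset (Finset.subset_univ _) ?_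
    intro i _ hi
    simp only [Finset.mem_compl, Finset.mem_singleton, not_not] at hi
    subst hi
    simp [halt]
  rw [← key, ← Finset.sum_add_distrib, ← Finset.sum_add_distrib]
  refine Finset.sum_congr rfl fun i _ => ?_
  rw [← Finset.sum_add_distrib, ← Finset.sum_add_distrib]
  refine Finset.sum_congr rfl fun j _ => ?_
  simp only [map_add, Finsupp.add_apply]
  rw [hsymm (b i) (b j)]
  ring

/-- **Counting quadratic refinements.**
If `B` is an alternating bilinear form on a finite `𝔽₂`-vector space `V`, then the set of
quadratic refinements of `B` has exactly `Fintype.card V` elements (a torsor over the dual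
space of `V`). -/
theorem quadRefinement_card {V : Type*} [AddCommGroup V] [Module (ZMod 2) V]
    [Fintype V] (B : V →ₗ[ZMod 2] V →ₗ[ZMod 2] ZMod 2)
    (halt : ∀ x : V, B x x = 0) :
    Fintype.card {q : V → ZMod 2 // ∀ x y, q (x + y) = q x + q y + B x y}
      = Fintype.card V := by
  obtain ⟨q₀, hq₀⟩ := exists_quadRefinement B halt
  have hadd : ∀ a : ZMod 2, a + a = 0 := by decide
  have e : {q : V → ZMod 2 // ∀ x y, q (x + y) = q x + q y + B x y}
      ≃ (V →ₗ[ZMod 2] ZMod 2) :=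
    { toFun := fun q =>
        { toFun := fun x => q.1 x + q₀ x
          map_add' := by
            intro x y
            show q.1 (x + y) + q₀ (x + y) = (q.1 x + q₀ x) + (q.1 y + q₀ y)
            rw [q.2, hq₀]
            linear_combination hadd ((B x) y)
          map_smul' := fun m x => by
            have h0 : q.1 0 + q₀ 0 = 0 := by
              have h1 := q.2 0 0
              have h2 := hq₀ 0 0
              simp only [add_zero, map_zero, LinearMap.zero_apply] at h1 h2
              have e1 : q.1 0 = 0 := by linear_combination -h1
              have e2 : q₀ 0 = 0 := by linear_combination -h2
              rw [e1, e2, add_zero]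
            fin_cases m
            · show q.1 ((0 : ZMod 2) • x) + q₀ ((0 : ZMod 2) • x) = (0 : ZMod 2) * (q.1 x + q₀ x)
              rw [zero_smul, zero_mul]
              exact h0
            · show q.1 ((1 : ZMod 2) • x) + q₀ ((1 : ZMod 2) • x) = (1 : ZMod 2) * (q.1 x + q₀ x)
              rw [one_smul, one_mul] }
      invFun := fun f => ⟨fun x => f x + q₀ x, by
        intro x y
        simp only [map_add, hq₀]
        ring⟩
      left_inv := fun q => by
        ext x
        simp only [LinearMap.coe_mk, AddHom.coe_mk]
        rw [add_assoc, hadd, add_zero]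
      right_inv := fun f => by
        ext x
        simp only [LinearMap.coe_mk, AddHom.coe_mk]
        rw [add_assoc, hadd, add_zero] }
  have e2 : (V →ₗ[ZMod 2] ZMod 2) ≃ V :=
    ((Module.finBasis (ZMod 2) V).toDualEquiv.symm.toEquiv)
  exact Fintype.card_congr (e.trans e2)
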